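/- arXiv:1004.0475 — 2 statements merged into one kernel-verified Lean document; each statement's English description precedes it below -/
import Mathlib

section
/- Let $P_0$ be a polynomial with simple roots $p_1, \ldots, p_m$ and let $K \subset \mathbb{C}$ be a compact set with $|y - p_k| \geq \epsilon > 0$ for all $y \in K$ and all $k$. Suppose functions $F_0, F_1, \ldots$ are analytic on a neighborhood of $K$ and satisfy $F_0'(y) = 1/P_0(y)$ and the recursion $F_k'(y) = \big((k-1)F_{k-1}(y) - \sum_{j=0}^{k-1} P_{k-j}(y) F_j'(y)\big)/P_0(y)$ for $k \geq 1$, where the $P_j$ are polynomials with $\sup_{y \in K} |P_j(y)| \leq B$ for all $j$, and suppose $\sup_{y\in K} |F_k(y)| \leq A_k$ where $A_k$ is finite for each $k$. If $A_k \leq M k! $ for all $k < n$ and $\sup_K|F_j'| \leq M' j!$ for all $j < n$, then $\sup_{y \in K} |F_n'(y)| \leq C \cdot n!$ for a constant $C$ depending only on $M, M', B, \epsilon, P_0, K$ and not on $n$. -/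
open Polynomial Finset


lemma sum_fact_le_fact : ∀ n : ℕ, (∑ j ∈ Finset.range n, Nat.factorial j) ≤ Nat.factorial n := by
  intro n
  induction n with
  | zero => simp
  | succ n ih =>
    rw [Finset.sum_range_succ, Nat.factorial_succ]
    rcases Nat.eq_zero_or_pos n with h0 | h1
    · subst h0; simp
    · calc (∑ j ∈ Finset.range n, Nat.factorial j) + Nat.factorial n
          ≤ Nat.factorial n + Nat.factorial n := by
            exact Nat.add_le_add_right ih _
        _ = 2 * Nat.factorial n := by ring
        _ ≤ (n + 1) * Nat.factorial n := by
            exact Nat.mul_le_mul_right _ (by omega)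

theorem stmt_7 (K : Set ℂ) (hK : IsCompact K)
    (P : ℕ → Polynomial ℂ) (m : ℕ) (p : Fin m → ℂ) (ε B M M' : ℝ)
    (hε : 0 < ε) (hB : 0 < B) (hM : 0 < M) (hM' : 0 < M')
    (hroots : (P 0).roots.toFinset = Finset.image p Finset.univ)
    (hsimple : Squarefree (P 0))
    (hsep : ∀ y ∈ K, ∀ i : Fin m, ε ≤ ‖y - p i‖)
    (U : Set ℂ) (hU : IsOpen U) (hKU : K ⊆ U)
    (F : ℕ → ℂ → ℂ)
    (hFanal : ∀ k : ℕ, AnalyticOn ℂ (F k) U)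
    (hF0 : ∀ y ∈ K, deriv (F 0) y = 1 / (P 0).eval y)
    (hrec : ∀ k : ℕ, 1 ≤ k → ∀ y ∈ K,
      deriv (F k) y = (((k : ℂ) - 1) * F (k - 1) y
        - ∑ j ∈ Finset.range k, (P (k - j)).eval y * deriv (F j) y) / (P 0).eval y)
    (hPbound : ∀ j : ℕ, ∀ y ∈ K, ‖(P j).eval y‖ ≤ B) :
    ∃ C : ℝ, 0 < C ∧ ∀ n : ℕ, 1 ≤ n →
      (∀ k < n, ∀ y ∈ K, ‖F k y‖ ≤ M * (Nat.factorial k)) →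
      (∀ j < n, ∀ y ∈ K, ‖deriv (F j) y‖ ≤ M' * (Nat.factorial j)) →
      ∀ y ∈ K, ‖deriv (F n) y‖ ≤ C * (Nat.factorial n) := by
  rcases K.eq_empty_or_nonempty with hKe | hne
  · exact ⟨1, one_pos, by simp [hKe]⟩
  have hP0ne : ∀ y ∈ K, (P 0).eval y ≠ 0 := by
    intro y hy h0
    have hP0 : P 0 ≠ 0 := by
      intro h; rw [h] at hsimple; exact not_squarefree_zero hsimple
    have hmem : y ∈ (P 0).roots.toFinset := by
      simp [Multiset.mem_toFinset, mem_roots, hP0, h0]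
    rw [hroots] at hmem
    obtain ⟨i, _, hi⟩ := Finset.mem_image.mp hmem
    have h1 := hsep y hy i
    rw [hi] at h1
    simp at h1
    linarith
  obtain ⟨y₀, hy₀, hmin⟩ := hK.exists_isMinOn hne
    ((continuous_norm.comp ((P 0).continuous)).continuousOn)
  set δ : ℝ := ‖(P 0).eval y₀‖ with hδdef
  have hδ : 0 < δ := norm_pos_iff.mpr (hP0ne y₀ hy₀)
  refine ⟨(M + B * M') / δ, div_pos (by positivity) hδ, ?_⟩
  intro n hn h1 h2 y hy
  rw [hrec n hn y hy, norm_div]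
  have hnum : ‖((n : ℂ) - 1) * F (n - 1) y
      - ∑ j ∈ Finset.range n, (P (n - j)).eval y * deriv (F j) y‖
      ≤ (M + B * M') * (Nat.factorial n) := by
    have hsub : ((n : ℂ) - 1) = ((n - 1 : ℕ) : ℂ) := by
      push_cast [Nat.cast_sub hn]; ring
    have ha : ‖((n : ℂ) - 1) * F (n - 1) y‖ ≤ M * (Nat.factorial n) := by
      rw [norm_mul, hsub]
      have h1' := h1 (n - 1) (by omega) y hy
      calc ‖((n - 1 : ℕ) : ℂ)‖ * ‖F (n - 1) y‖
          ≤ ((n - 1 : ℕ) : ℝ) * (M * (Nat.factorial (n - 1))) := by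
            rw [Complex.norm_natCast]
            exact mul_le_mul_of_nonneg_left h1' (Nat.cast_nonneg _)
        _ ≤ ((n : ℕ) : ℝ) * (M * (Nat.factorial (n - 1))) := by
            apply mul_le_mul_of_nonneg_right _ (by positivity)
            exact_mod_cast Nat.cast_le.mpr (Nat.sub_le n 1)
        _ = M * (n * Nat.factorial (n - 1)) := by ring
        _ = M * (Nat.factorial n) := by
            have hfact : Nat.factorial n = n * Nat.factorial (n - 1) := by
              cases n with
              | zero => omega
              | succ k => simp [Nat.factorial_succ]
            rw [hfact]; push_cast; ring
    have hb : ‖∑ j ∈ Finset.range n, (P (n - j)).eval y * deriv (F j) y‖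
        ≤ B * M' * (Nat.factorial n) := by
      calc ‖∑ j ∈ Finset.range n, (P (n - j)).eval y * deriv (F j) y‖
          ≤ ∑ j ∈ Finset.range n, ‖(P (n - j)).eval y * deriv (F j) y‖ :=
            norm_sum_le _ _
        _ ≤ ∑ j ∈ Finset.range n, B * (M' * (Nat.factorial j)) := by
            apply Finset.sum_le_sum
            intro j hj
            rw [norm_mul]
            exact mul_le_mul (hPbound (n - j) y hy)
              (h2 j (Finset.mem_range.mp hj) y hy) (norm_nonneg _)
              (le_of_lt hB)
        _ = B * M' * ∑ j ∈ Finset.range n, ((Nat.factorial j : ℝ)) := by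
            rw [Finset.mul_sum]; ring_nf
        _ ≤ B * M' * (Nat.factorial n) := by
            apply mul_le_mul_of_nonneg_left _ (by positivity)
            exact_mod_cast sum_fact_le_fact n
    calc ‖((n : ℂ) - 1) * F (n - 1) y
        - ∑ j ∈ Finset.range n, (P (n - j)).eval y * deriv (F j) y‖
        ≤ ‖((n : ℂ) - 1) * F (n - 1) y‖
          + ‖∑ j ∈ Finset.range n, (P (n - j)).eval y * deriv (F j) y‖ :=
          norm_sub_le _ _
      _ ≤ M * (Nat.factorial n) + B * M' * (Nat.factorial n) := add_le_add ha hb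
      _ = (M + B * M') * (Nat.factorial n) := by ring
  calc ‖((n : ℂ) - 1) * F (n - 1) y
      - ∑ j ∈ Finset.range n, (P (n - j)).eval y * deriv (F j) y‖ / ‖(P 0).eval y‖
      ≤ ((M + B * M') * (Nat.factorial n)) / δ := by
        apply div_le_div₀ (by positivity) hnum hδ (hmin hy)
    _ = (M + B * M') / δ * (Nat.factorial n) := by ring
end

section
/- Let $C_n(y,x) = -x + a\log x + F_0(y) + \sum_{k=1}^n F_k(y)/x^k$, where the functions $F_k$ are differentiable and satisfy $P_0 F_0' = 1$, $a + P_1 F_0' + P_0 F_1' = 0$, and $(1-k)F_{k-1} + \sum_{j=0}^k P_{k-j} F_j' = 0$ for $2 \leq k \leq n$, with $P_j$ the coefficients of $Q_1(y,1/x) = \sum_{k=0}^\infty P_k(y) x^{-k}$ (convergent for $|x| > R$). Then for any differentiable $y(x)$ solving $y' = Q_1(y, 1/x)$, one has $\frac{d}{dx} C_n(y(x), x) = x^{-(n+1)}\left(-n F_n(y) + \sum_{j=0}^n \sum_{k=0}^\infty P_{n+k+1-j}(y) F_j'(y) x^{-k}\right)$ for $|x| > R$. -/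
open Finset

private lemma key_alg (a : ℂ) (n : ℕ) (hn : 2 ≤ n) (X : ℂ) (hX : X ≠ 0)
    (p f g : ℕ → ℂ)
    (s0 : Summable (fun m : ℕ => p m * X ^ (-(m : ℤ))))
    (heq0 : p 0 * f 0 = 1)
    (heq1 : a + p 1 * f 0 + p 0 * f 1 = 0)
    (heqk : ∀ k, 2 ≤ k → k ≤ n →
      (1 - (k : ℂ)) * g (k - 1) + ∑ j ∈ range (k + 1), p (k - j) * f j = 0) :
    -1 + a * X⁻¹ + f 0 * (∑' m : ℕ, p m * X ^ (-(m : ℤ)))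
      + ∑ k ∈ Icc 1 n, (f k * (∑' m : ℕ, p m * X ^ (-(m : ℤ))) * X ^ (-(k : ℤ))
          + g k * ((-(k : ℤ) : ℂ) * X ^ (-(k : ℤ) - 1)))
    = X ^ (-((n : ℤ) + 1)) * (-(n : ℂ) * g n
        + ∑' k : ℕ, (∑ j ∈ range (n + 1), p (n + k + 1 - j) * f j) * X ^ (-(k : ℤ))) := by
  set T : ℂ := ∑' m : ℕ, p m * X ^ (-(m : ℤ)) with hT
  have hsummand : ∀ j, j ≤ n → Summable (fun k : ℕ => p (n + k + 1 - j) * f j * X ^ (-(k : ℤ))) := by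
    intro j hj
    set N := n + 1 - j with hN
    have h := ((summable_nat_add_iff N).2 s0).mul_right (f j * X ^ ((N : ℕ) : ℤ))
    apply h.congr
    intro k
    have hidx : n + k + 1 - j = k + N := by omega
    rw [hidx]
    have e : X ^ (-((k + N : ℕ) : ℤ)) * X ^ ((N : ℕ) : ℤ) = X ^ (-(k : ℤ)) := by
      rw [← zpow_add₀ hX]; congr 1; push_cast; ring
    linear_combination (p (k + N) * f j) * e
  have hsplit : ∀ j, j ≤ n → f j * T * X ^ (-(j : ℤ))
      = (∑ m ∈ range (n + 1 - j), p m * f j * X ^ (-((m + j : ℕ) : ℤ)))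
        + X ^ (-((n : ℤ) + 1)) * ∑' k : ℕ, p (n + k + 1 - j) * f j * X ^ (-(k : ℤ)) := by
    intro j hj
    set N := n + 1 - j with hN
    have h1 := Summable.sum_add_tsum_nat_add (f := fun m : ℕ => p m * X ^ (-(m : ℤ))) N s0
    have h2 : f j * T * X ^ (-(j : ℤ))
        = (∑ m ∈ range N, p m * X ^ (-(m : ℤ))) * (f j * X ^ (-(j : ℤ)))
          + (∑' k : ℕ, p (k + N) * X ^ (-((k + N : ℕ) : ℤ))) * (f j * X ^ (-(j : ℤ))) := by
      rw [← add_mul, h1]; ring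
    rw [h2]
    congr 1
    · rw [Finset.sum_mul]
      refine Finset.sum_congr rfl fun m hm => ?_
      have e : X ^ (-(m : ℤ)) * X ^ (-(j : ℤ)) = X ^ (-((m + j : ℕ) : ℤ)) := by
        rw [← zpow_add₀ hX]; congr 1; push_cast; ring
      linear_combination (p m * f j) * e
    · rw [← tsum_mul_right, ← tsum_mul_left]
      refine tsum_congr fun k => ?_
      have hidx : n + k + 1 - j = k + N := by omega
      rw [hidx]
      have e : X ^ (-((k + N : ℕ) : ℤ)) * X ^ (-(j : ℤ)) = X ^ (-((n : ℤ) + 1)) * X ^ (-(k : ℤ)) := by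
        rw [← zpow_add₀ hX, ← zpow_add₀ hX]; congr 1; omega
      linear_combination (p (k + N) * f j) * e
  have hmain : f 0 * T + ∑ k ∈ Icc 1 n, f k * T * X ^ (-(k : ℤ))
      = ∑ j ∈ range (n + 1), f j * T * X ^ (-(j : ℤ)) := by
    have hins : range (n + 1) = insert 0 (Icc 1 n) := by
      ext m; simp only [Finset.mem_range, Finset.mem_insert, Finset.mem_Icc]; omega
    rw [hins, Finset.sum_insert (by simp)]
    simp
  have hA : (∑ j ∈ range (n + 1), ∑ m ∈ range (n + 1 - j), p m * f j * X ^ (-((m + j : ℕ) : ℤ)))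
      = ∑ k ∈ range (n + 1), (∑ j ∈ range (k + 1), p (k - j) * f j) * X ^ (-(k : ℤ)) := by
    have hrhs : ∀ k : ℕ, (∑ j ∈ range (k + 1), p (k - j) * f j) * X ^ (-(k : ℤ))
        = ∑ j ∈ range (k + 1), p (k - j) * f j * X ^ (-(k : ℤ)) := fun k => Finset.sum_mul _ _ _
    simp only [hrhs]
    rw [Finset.sum_sigma', Finset.sum_sigma']
    refine Finset.sum_nbij' (fun q => ⟨q.1 + q.2, q.1⟩) (fun q => ⟨q.2, q.1 - q.2⟩) ?_ ?_ ?_ ?_ ?_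
    · rintro ⟨j, m⟩ hq
      simp only [Finset.mem_sigma, Finset.mem_range] at hq ⊢
      omega
    · rintro ⟨k, j⟩ hq
      simp only [Finset.mem_sigma, Finset.mem_range] at hq ⊢
      omega
    · rintro ⟨j, m⟩ hq
      simp only [Finset.mem_sigma, Finset.mem_range] at hq
      simp only [Sigma.mk.inj_iff, heq_eq_eq, true_and, Nat.add_sub_cancel_left]
    · rintro ⟨k, j⟩ hq
      simp only [Finset.mem_sigma, Finset.mem_range] at hq
      simp only [Sigma.mk.inj_iff, heq_eq_eq, and_true]
      omega
    · rintro ⟨j, m⟩ hq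
      simp only [Finset.mem_sigma, Finset.mem_range] at hq
      dsimp only
      have h1 : j + m - j = m := by omega
      rw [h1, Nat.add_comm j m]
  -- evaluate the triangular sum via the relations
  have hB : (∑ k ∈ range (n + 1), (∑ j ∈ range (k + 1), p (k - j) * f j) * X ^ (-(k : ℤ)))
      = 1 + -a * X⁻¹ + ∑ k ∈ Icc 2 n, ((k : ℂ) - 1) * g (k - 1) * X ^ (-(k : ℤ)) := by
    rw [Finset.range_eq_Ico, ← Finset.sum_Ico_consecutive _ (by omega : 0 ≤ 2) (by omega : 2 ≤ n + 1)]
    congr 1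
    · rw [Nat.Ico_zero_eq_range]
      simp only [Nat.Ico_zero_eq_range, Finset.sum_range_succ, Finset.sum_range_zero,
        Nat.sub_zero, Nat.sub_self, zero_add, Nat.cast_zero, neg_zero, zpow_zero, mul_one,
        Nat.cast_one]
      rw [show (-(1 : ℤ)) = (-1 : ℤ) from rfl, zpow_neg_one]
      linear_combination heq0 + X⁻¹ * heq1
    · rw [Finset.Ico_add_one_right_eq_Icc]
      refine Finset.sum_congr rfl fun k hk => ?_
      rw [Finset.mem_Icc] at hk
      have h := heqk k hk.1 hk.2
      linear_combination X ^ (-(k : ℤ)) * h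
  -- the g-sum
  have hG : (∑ k ∈ Icc 1 n, g k * ((-(k : ℤ) : ℂ) * X ^ (-(k : ℤ) - 1)))
      = -(∑ k ∈ Icc 2 n, ((k : ℂ) - 1) * g (k - 1) * X ^ (-(k : ℤ)))
        - (n : ℂ) * g n * X ^ (-((n : ℤ) + 1)) := by
    have h1 : (∑ k ∈ Icc 1 n, g k * ((-(k : ℤ) : ℂ) * X ^ (-(k : ℤ) - 1)))
        = ∑ k ∈ Icc 2 (n + 1), -(((k : ℂ) - 1) * g (k - 1) * X ^ (-(k : ℤ))) := by
      refine Finset.sum_nbij' (fun k => k + 1) (fun k => k - 1) ?_ ?_ ?_ ?_ ?_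
      · intro k hk; rw [Finset.mem_Icc] at hk ⊢; omega
      · intro k hk; rw [Finset.mem_Icc] at hk ⊢; omega
      · intro k hk; omega
      · intro k hk; rw [Finset.mem_Icc] at hk; omega
      · intro k hk
        rw [Finset.mem_Icc] at hk
        have h2 : k + 1 - 1 = k := by omega
        rw [h2]
        have e : X ^ (-(k : ℤ) - 1) = X ^ (-((k + 1 : ℕ) : ℤ)) := by congr 1; omega
        rw [e]
        push_cast
        ring
    rw [h1, Finset.sum_Icc_succ_top (by omega : 2 ≤ n + 1)]
    have h3 : n + 1 - 1 = n := by omega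
    rw [h3]
    have e : X ^ (-((n + 1 : ℕ) : ℤ)) = X ^ (-((n : ℤ) + 1)) := by
      norm_cast
    rw [e]
    push_cast
    rw [Finset.sum_neg_distrib]
    ring
  -- assemble everything
  have hsum2 : ∑ k ∈ Icc 1 n, (f k * T * X ^ (-(k : ℤ)) + g k * ((-(k : ℤ) : ℂ) * X ^ (-(k : ℤ) - 1)))
      = (∑ k ∈ Icc 1 n, f k * T * X ^ (-(k : ℤ)))
        + ∑ k ∈ Icc 1 n, g k * ((-(k : ℤ) : ℂ) * X ^ (-(k : ℤ) - 1)) :=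
    Finset.sum_add_distrib
  rw [hsum2]
  have hsplit' : ∑ j ∈ range (n + 1), f j * T * X ^ (-(j : ℤ))
      = (∑ j ∈ range (n + 1), ∑ m ∈ range (n + 1 - j), p m * f j * X ^ (-((m + j : ℕ) : ℤ)))
        + X ^ (-((n : ℤ) + 1))
          * ∑' k : ℕ, (∑ j ∈ range (n + 1), p (n + k + 1 - j) * f j) * X ^ (-(k : ℤ)) := by
    calc ∑ j ∈ range (n + 1), f j * T * X ^ (-(j : ℤ))
        = ∑ j ∈ range (n + 1), ((∑ m ∈ range (n + 1 - j), p m * f j * X ^ (-((m + j : ℕ) : ℤ)))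
            + X ^ (-((n : ℤ) + 1)) * ∑' k : ℕ, p (n + k + 1 - j) * f j * X ^ (-(k : ℤ))) := by
          refine Finset.sum_congr rfl fun j hj => ?_
          exact hsplit j (by rw [Finset.mem_range] at hj; omega)
      _ = (∑ j ∈ range (n + 1), ∑ m ∈ range (n + 1 - j), p m * f j * X ^ (-((m + j : ℕ) : ℤ)))
            + ∑ j ∈ range (n + 1),
                X ^ (-((n : ℤ) + 1)) * ∑' k : ℕ, p (n + k + 1 - j) * f j * X ^ (-(k : ℤ)) :=
          Finset.sum_add_distrib
      _ = (∑ j ∈ range (n + 1), ∑ m ∈ range (n + 1 - j), p m * f j * X ^ (-((m + j : ℕ) : ℤ)))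
            + X ^ (-((n : ℤ) + 1))
              * ∑ j ∈ range (n + 1), ∑' k : ℕ, p (n + k + 1 - j) * f j * X ^ (-(k : ℤ)) := by
          rw [Finset.mul_sum]
      _ = _ := by
          congr 1
          congr 1
          rw [← Summable.tsum_finsetSum (fun j hj => hsummand j (by rw [Finset.mem_range] at hj; omega))]
          refine tsum_congr fun k => ?_
          rw [Finset.sum_mul]
  have key : f 0 * T + ∑ k ∈ Icc 1 n, f k * T * X ^ (-(k : ℤ))
      = (1 + -a * X⁻¹ + ∑ k ∈ Icc 2 n, ((k : ℂ) - 1) * g (k - 1) * X ^ (-(k : ℤ)))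
        + X ^ (-((n : ℤ) + 1))
          * ∑' k : ℕ, (∑ j ∈ range (n + 1), p (n + k + 1 - j) * f j) * X ^ (-(k : ℤ)) := by
    rw [hmain, hsplit', hA, hB]
  rw [hG]
  -- final ring manipulation
  have : -1 + a * X⁻¹ + f 0 * T + ((∑ k ∈ Icc 1 n, f k * T * X ^ (-(k : ℤ)))
      + (-(∑ k ∈ Icc 2 n, ((k : ℂ) - 1) * g (k - 1) * X ^ (-(k : ℤ)))
        - (n : ℂ) * g n * X ^ (-((n : ℤ) + 1))))
    = -1 + a * X⁻¹ + (f 0 * T + ∑ k ∈ Icc 1 n, f k * T * X ^ (-(k : ℤ)))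
      + (-(∑ k ∈ Icc 2 n, ((k : ℂ) - 1) * g (k - 1) * X ^ (-(k : ℤ)))
        - (n : ℂ) * g n * X ^ (-((n : ℤ) + 1))) := by ring
  rw [this, key]
  ring


theorem stmt_8 (R : ℝ) (hR : 0 < R) (a : ℂ) (n : ℕ) (hn : 2 ≤ n)
    (P : ℕ → ℂ → ℂ) (F F' : ℕ → ℂ → ℂ) (y : ℝ → ℂ)
    (hconv : ∀ z : ℂ, ∀ x : ℝ, x > R → Summable (fun k : ℕ => ‖P k z‖ * x ^ (-(k : ℤ))))
    (hF : ∀ k : ℕ, ∀ z : ℂ, HasDerivAt (F k) (F' k z) z)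
    (heq0 : ∀ z : ℂ, P 0 z * F' 0 z = 1)
    (heq1 : ∀ z : ℂ, a + P 1 z * F' 0 z + P 0 z * F' 1 z = 0)
    (heqk : ∀ k : ℕ, 2 ≤ k → k ≤ n → ∀ z : ℂ,
      (1 - (k : ℂ)) * F (k - 1) z + ∑ j ∈ Finset.range (k + 1), P (k - j) z * F' j z = 0)
    (hy : ∀ x : ℝ, x > R →
      HasDerivAt y (∑' k : ℕ, P k (y x) * (x : ℂ) ^ (-(k : ℤ))) x) :
    ∀ x : ℝ, x > R →
      HasDerivAt (fun x : ℝ => -(x : ℂ) + a * Real.log x + F 0 (y x)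
          + ∑ k ∈ Finset.Icc 1 n, F k (y x) * (x : ℂ) ^ (-(k : ℤ)))
        ((x : ℂ) ^ (-((n : ℤ) + 1)) * (-(n : ℂ) * F n (y x)
          + ∑' k : ℕ, (∑ j ∈ Finset.range (n + 1),
              P (n + k + 1 - j) (y x) * F' j (y x)) * (x : ℂ) ^ (-(k : ℤ)))) x := by
  intro x hx
  have hx0 : (0 : ℝ) < x := hR.trans hx
  have hxC : (x : ℂ) ≠ 0 := by exact_mod_cast hx0.ne'
  have hT := hy x hx
  set T : ℂ := ∑' k : ℕ, P k (y x) * (x : ℂ) ^ (-(k : ℤ)) with hTdef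
  -- Step A: compute the derivative
  have h1 : HasDerivAt (fun x : ℝ => -(x : ℂ)) (-1) x := by
    have := ((hasDerivAt_id x).ofReal_comp.neg); simp at this; exact this
  have h2 : HasDerivAt (fun x : ℝ => a * (Real.log x : ℂ)) (a * (x : ℂ)⁻¹) x := by
    have := ((Real.hasDerivAt_log hx0.ne').ofReal_comp).const_mul a
    simpa using this
  have h3 : ∀ k : ℕ, HasDerivAt (fun x : ℝ => F k (y x)) (F' k (y x) * T) x := fun k =>
    (hF k (y x)).comp x hT
  have h4 : ∀ k : ℕ, HasDerivAt (fun x : ℝ => ((x : ℂ)) ^ (-(k : ℤ)))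
      ((-(k : ℤ) : ℂ) * (x : ℂ) ^ (-(k : ℤ) - 1)) x := by
    intro k
    have := (hasDerivAt_zpow (-(k : ℤ)) (x : ℂ) (Or.inl hxC)).comp x (hasDerivAt_id x).ofReal_comp
    simp at this ⊢; exact this
  have h5 : ∀ k ∈ Finset.Icc 1 n,
      HasDerivAt (fun x : ℝ => F k (y x) * (x : ℂ) ^ (-(k : ℤ)))
        (F' k (y x) * T * (x : ℂ) ^ (-(k : ℤ))
          + F k (y x) * ((-(k : ℤ) : ℂ) * (x : ℂ) ^ (-(k : ℤ) - 1))) x :=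
    fun k _ => (h3 k).mul (h4 k)
  have hD : HasDerivAt (fun x : ℝ => -(x : ℂ) + a * Real.log x + F 0 (y x)
      + ∑ k ∈ Finset.Icc 1 n, F k (y x) * (x : ℂ) ^ (-(k : ℤ)))
      (-1 + a * (x : ℂ)⁻¹ + F' 0 (y x) * T
        + ∑ k ∈ Finset.Icc 1 n, (F' k (y x) * T * (x : ℂ) ^ (-(k : ℤ))
            + F k (y x) * ((-(k : ℤ) : ℂ) * (x : ℂ) ^ (-(k : ℤ) - 1)))) x :=
    ((h1.add h2).add (h3 0)).add (HasDerivAt.fun_sum h5)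
  -- summability
  have s0 : Summable (fun m : ℕ => P m (y x) * (x : ℂ) ^ (-(m : ℤ))) := by
    apply Summable.of_norm
    apply (hconv (y x) x hx).congr
    intro m
    rw [norm_mul, norm_zpow, Complex.norm_real, Real.norm_eq_abs, abs_of_pos hx0]
  -- Step B: the algebraic identity
  have halg : -1 + a * (x : ℂ)⁻¹ + F' 0 (y x) * T
        + ∑ k ∈ Finset.Icc 1 n, (F' k (y x) * T * (x : ℂ) ^ (-(k : ℤ))
            + F k (y x) * ((-(k : ℤ) : ℂ) * (x : ℂ) ^ (-(k : ℤ) - 1)))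
      = (x : ℂ) ^ (-((n : ℤ) + 1)) * (-(n : ℂ) * F n (y x)
          + ∑' k : ℕ, (∑ j ∈ Finset.range (n + 1),
              P (n + k + 1 - j) (y x) * F' j (y x)) * (x : ℂ) ^ (-(k : ℤ))) := by
    rw [hTdef]
    exact key_alg a n hn (x : ℂ) hxC (fun k => P k (y x)) (fun k => F' k (y x))
      (fun k => F k (y x)) s0 (heq0 (y x)) (heq1 (y x)) (fun k h2 hkn => heqk k h2 hkn (y x))
  rw [halg] at hD
  exact hD
end
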